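/- For z ≠ 0 and |q| < 1, the Jacobi triple product identity holds: ∑_{n=-∞}^{∞} z^n q^{n^2} = ∏_{n=0}^{∞} (1 - q^{2n+2})(1 + z q^{2n+1})(1 + z^{-1} q^{2n+1}). -/

import Mathlib

open Finset

namespace JTP

/-- partial q-Pochhammer ∏_{j=1}^n (1 - t^j) -/
def Qp (t : ℂ) (n : ℕ) : ℂ := ∏ j ∈ Finset.range n, (1 - t ^ (j + 1))

/-- Gaussian binomial coefficient (base t) defined by the Pascal recurrence. -/
def gb (t : ℂ) : ℕ → ℕ → ℂ
  | 0, 0 => 1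
  | 0, _ + 1 => 0
  | _ + 1, 0 => 1
  | m + 1, k + 1 => gb t m (k + 1) + t ^ (m - k) * gb t m k

@[simp] lemma gb_zero_right (t : ℂ) (m : ℕ) : gb t m 0 = 1 := by
  cases m <;> rfl

lemma gb_of_lt (t : ℂ) : ∀ {m k : ℕ}, m < k → gb t m k = 0 := by
  intro m
  induction m with
  | zero =>
    intro k hk
    match k, hk with
    | k + 1, _ => rfl
  | succ m ih =>
    intro k hk
    match k, hk with
    | k + 1, hk =>
      show gb t m (k + 1) + t ^ (m - k) * gb t m k = 0
      rw [ih (by omega), ih (by omega)]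
      ring

@[simp] lemma gb_self (t : ℂ) : ∀ m : ℕ, gb t m m = 1 := by
  intro m
  induction m with
  | zero => rfl
  | succ m ih =>
    show gb t m (m + 1) + t ^ (m - m) * gb t m m = 1
    rw [gb_of_lt t (by omega), ih, Nat.sub_self]
    simp

lemma Qp_succ (t : ℂ) (n : ℕ) : Qp t (n + 1) = Qp t n * (1 - t ^ (n + 1)) :=
  Finset.prod_range_succ _ _

lemma Qp_add (t : ℂ) (n k : ℕ) :
    Qp t (n + k) = Qp t n * ∏ i ∈ Finset.range k, (1 - t ^ (n + 1 + i)) := by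
  rw [Qp, Finset.prod_range_add]
  congr 1
  · apply Finset.prod_congr rfl
    intro i _
    rw [show n + 1 + i = n + i + 1 by omega]

lemma Qp_ne_zero {t : ℂ} (ht : ‖t‖ < 1) (n : ℕ) : Qp t n ≠ 0 := by
  rw [Qp]
  apply Finset.prod_ne_zero_iff.2
  intro j _ h
  have h1 : (1 : ℂ) = t ^ (j + 1) := sub_eq_zero.1 h
  have h2 : ‖t ^ (j + 1)‖ < 1 := by
    rw [norm_pow]
    calc ‖t‖ ^ (j + 1) ≤ ‖t‖ ^ 1 := by
          apply pow_le_pow_of_le_one (norm_nonneg t) ht.le; omega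
      _ < 1 := by simpa using ht
  rw [← h1] at h2
  simp at h2

lemma gb_mul_Qp (t : ℂ) : ∀ m k : ℕ, k ≤ m → gb t m k * (Qp t k * Qp t (m - k)) = Qp t m := by
  intro m
  induction m with
  | zero => intro k hk; interval_cases k; simp [Qp]
  | succ m ih =>
    intro k hk
    match k with
    | 0 => simp [Qp]
    | k + 1 =>
      have hk' : k ≤ m := by omega
      show (gb t m (k + 1) + t ^ (m - k) * gb t m k) * (Qp t (k + 1) * Qp t (m + 1 - (k + 1))) = _
      have hsub : m + 1 - (k + 1) = m - k := by omega
      rw [hsub]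
      rcases eq_or_lt_of_le hk' with heq | hlt
      · subst heq
        rw [gb_of_lt t (by omega), gb_self, Nat.sub_self]
        simp [Qp]
      · have h1 : gb t m (k + 1) * (Qp t (k + 1) * Qp t (m - (k + 1))) = Qp t m := ih (k + 1) hlt
        have h2 : gb t m k * (Qp t k * Qp t (m - k)) = Qp t m := ih k hk'
        have e1 : Qp t (m - k) = Qp t (m - (k + 1)) * (1 - t ^ (m - k)) := by
          have h3 : m - k = (m - (k + 1)) + 1 := by omega
          rw [h3, Qp_succ]
        have e2 : Qp t (k + 1) = Qp t k * (1 - t ^ (k + 1)) := Qp_succ t k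
        have e3 : t ^ (m - k) * t ^ (k + 1) = t ^ (m + 1) := by
          rw [← pow_add]; congr 1; omega
        rw [Qp_succ t m]
        calc (gb t m (k + 1) + t ^ (m - k) * gb t m k) * (Qp t (k + 1) * Qp t (m - k))
            = (gb t m (k + 1) * (Qp t (k + 1) * Qp t (m - (k + 1)))) * (1 - t ^ (m - k)) +
              t ^ (m - k) * (1 - t ^ (k + 1)) * (gb t m k * (Qp t k * Qp t (m - k))) := by
              rw [e1, e2]; ring
          _ = Qp t m * (1 - t ^ (m - k)) + t ^ (m - k) * (1 - t ^ (k + 1)) * Qp t m := by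
              rw [h1, h2]
          _ = Qp t m * (1 - t ^ (m + 1)) := by
              rw [← e3]; ring

lemma gb_symm {t : ℂ} (ht : ‖t‖ < 1) {m k : ℕ} (hk : k ≤ m) : gb t m (m - k) = gb t m k := by
  have h1 := gb_mul_Qp t m k hk
  have h2 := gb_mul_Qp t m (m - k) (by omega)
  have h3 : m - (m - k) = k := by omega
  rw [h3] at h2
  have hne : Qp t k * Qp t (m - k) ≠ 0 :=
    mul_ne_zero (Qp_ne_zero ht k) (Qp_ne_zero ht (m - k))
  refine (mul_right_cancel₀ hne ?_).symm
  linear_combination h1 - h2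

lemma gb_succ_succ (t : ℂ) (m k : ℕ) :
    gb t (m + 1) (k + 1) = gb t m (k + 1) + t ^ (m - k) * gb t m k := rfl

lemma gauss (q x : ℂ) : ∀ m : ℕ, ∏ j ∈ Finset.range m, (1 + x * q ^ (2 * j))
    = ∑ k ∈ Finset.range (m + 1), q ^ (k * (k - 1)) * gb (q ^ 2) m k * x ^ k := by
  intro m
  induction m with
  | zero => simp [gb]
  | succ m ih =>
    set t : ℂ := q ^ 2 with ht
    set g : ℕ → ℂ := fun k => q ^ (k * (k - 1)) * gb t m k * x ^ k with hg
    set S : ℂ := ∑ k ∈ Finset.range (m + 1), g k with hS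
    have hfi : ∀ i ∈ Finset.range (m + 1),
        q ^ ((i+1) * ((i+1) - 1)) * gb t (m+1) (i+1) * x ^ (i+1)
          = g (i + 1) + (x * q ^ (2 * m)) * g i := by
      intro i hi
      have him : i ≤ m := by simpa using Nat.lt_succ_iff.1 (Finset.mem_range.1 hi)
      rw [gb_succ_succ]
      have hpow : q ^ ((i+1) * ((i+1) - 1)) * t ^ (m - i) = q ^ (2 * m) * q ^ (i * (i - 1)) := by
        rw [ht, ← pow_mul, ← pow_add, ← pow_add]
        congr 1
        obtain ⟨d, rfl⟩ : ∃ d, m = i + d := ⟨m - i, by omega⟩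
        rcases i with _ | j
        · simp
        · have h1 : (j + 1 + d) - (j + 1) = d := by omega
          have h2 : (j + 1 + 1) - 1 = j + 1 := by omega
          have h3 : (j + 1) - 1 = j := by omega
          rw [h1, h2, h3]
          ring
      calc q ^ ((i+1) * ((i+1) - 1)) * (gb t m (i+1) + t ^ (m - i) * gb t m i) * x ^ (i+1)
          = q ^ ((i+1) * ((i+1) - 1)) * gb t m (i+1) * x ^ (i+1)
            + (q ^ ((i+1) * ((i+1) - 1)) * t ^ (m - i)) * gb t m i * x ^ (i + 1) := by ring
        _ = g (i + 1) + (x * q ^ (2 * m)) * g i := by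
            rw [hpow, hg]
            rw [pow_succ]
            ring
    calc ∏ j ∈ Finset.range (m + 1), (1 + x * q ^ (2 * j))
        = S * (1 + x * q ^ (2 * m)) := by rw [Finset.prod_range_succ, ih]
      _ = ∑ k ∈ Finset.range (m + 1 + 1), q ^ (k * (k - 1)) * gb t (m + 1) k * x ^ k := by
          rw [Finset.sum_range_succ' (fun k => q ^ (k * (k - 1)) * gb t (m + 1) k * x ^ k) (m + 1)]
          rw [Finset.sum_congr rfl hfi, Finset.sum_add_distrib, ← Finset.mul_sum, ← hS]
          rw [Finset.sum_range_succ (fun i => g (i + 1)) m]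
          have hgm1 : g (m + 1) = 0 := by
            show q ^ ((m+1) * ((m+1) - 1)) * gb t m (m+1) * x ^ (m+1) = 0
            rw [gb_of_lt t (by omega)]
            ring
          have hS' : S = ∑ i ∈ Finset.range m, g (i + 1) + g 0 :=
            Finset.sum_range_succ' g m
          have hg0 : g 0 = 1 := by
            show q ^ (0 * (0 - 1)) * gb t m 0 * x ^ 0 = 1
            simp
          rw [hgm1, hS', hg0]
          simp only [gb_zero_right, Nat.zero_sub, Nat.mul_zero, pow_zero, mul_one, one_mul]
          ring

lemma sum_odd (N : ℕ) : ∑ j ∈ Finset.range N, (2 * j + 1) = N ^ 2 := by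
  induction N with
  | zero => simp
  | succ n ih => rw [Finset.sum_range_succ, ih]; ring

lemma finite_jtp (q z : ℂ) (hq : q ≠ 0) (hz : z ≠ 0) (N : ℕ) :
    ∏ j ∈ Finset.range N, ((1 + z * q ^ (2 * j + 1)) * (1 + z⁻¹ * q ^ (2 * j + 1)))
      = ∑ k ∈ Finset.range (2 * N + 1),
          gb (q ^ 2) (2 * N) k * (z ^ ((k : ℤ) - N) * q ^ (((k : ℤ) - N) ^ 2)) := by
  set x : ℂ := z * q ^ ((1 : ℤ) - 2 * N) with hx
  -- step 1: rewrite the reciprocal factors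
  have step1 : ∏ j ∈ Finset.range N, (1 + z⁻¹ * q ^ (2 * j + 1))
      = z ^ (-(N : ℤ)) * q ^ (N ^ 2) *
        ∏ j ∈ Finset.range N, (1 + z * q ^ (-(2 * (j : ℤ) + 1))) := by
    have hfac : ∀ j ∈ Finset.range N, (1 + z⁻¹ * q ^ (2 * j + 1))
        = (z⁻¹ * q ^ (2 * j + 1)) * (1 + z * q ^ (-(2 * (j : ℤ) + 1))) := by
      intro j _
      have hq1 : q ^ (2 * j + 1) * q ^ (-(2 * (j : ℤ) + 1)) = 1 := by
        rw [← zpow_natCast q (2 * j + 1), ← zpow_add₀ hq]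
        rw [show ((2 * j + 1 : ℕ) : ℤ) + (-(2 * (j : ℤ) + 1)) = 0 by push_cast; ring]
        simp
      linear_combination (-(z⁻¹ * z)) * hq1 - inv_mul_cancel₀ hz
    rw [Finset.prod_congr rfl hfac, Finset.prod_mul_distrib, Finset.prod_mul_distrib]
    congr 1
    rw [Finset.prod_const, Finset.prod_pow_eq_pow_sum]
    rw [sum_odd, Finset.card_range, inv_pow, ← zpow_natCast z N, ← zpow_neg]
  -- step 2: merging into one product of length 2N
  have step2 : (∏ j ∈ Finset.range N, (1 + z * q ^ (-(2 * (j : ℤ) + 1)))) *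
      ∏ j ∈ Finset.range N, (1 + z * q ^ (2 * j + 1))
      = ∏ i ∈ Finset.range (2 * N), (1 + x * q ^ (2 * i)) := by
    have hF : ∀ i : ℕ, (1 + x * q ^ (2 * i)) = 1 + z * q ^ (2 * (i : ℤ) + 1 - 2 * N) := by
      intro i
      rw [hx, mul_assoc, ← zpow_natCast q (2 * i), ← zpow_add₀ hq]
      congr 3
      push_cast
      ring
    rw [show 2 * N = N + N by ring, Finset.prod_range_add]
    congr 1
    · rw [← Finset.prod_range_reflect]
      apply Finset.prod_congr rfl
      intro j hj
      have hjN : j < N := Finset.mem_range.1 hj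
      rw [hF]
      congr 2
      have : ((N - 1 - j : ℕ) : ℤ) = (N : ℤ) - 1 - j := by omega
      rw [this]
      ring
    · apply Finset.prod_congr rfl
      intro j _
      rw [hF]
      congr 2
      rw [← zpow_natCast q (2 * j + 1)]
      congr 1
      push_cast
      ring
  -- step 3: assemble and apply gauss
  have key : ∏ j ∈ Finset.range N, ((1 + z * q ^ (2 * j + 1)) * (1 + z⁻¹ * q ^ (2 * j + 1)))
      = z ^ (-(N : ℤ)) * q ^ (N ^ 2) * ∑ k ∈ Finset.range (2 * N + 1),
          q ^ (k * (k - 1)) * gb (q ^ 2) (2 * N) k * x ^ k := by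
    rw [Finset.prod_mul_distrib, step1, ← gauss, ← step2]
    ring
  rw [key, Finset.mul_sum]
  apply Finset.sum_congr rfl
  intro k hk
  -- termwise identity
  have hxk : x ^ k = z ^ k * q ^ (((1 : ℤ) - 2 * N) * k) := by
    rw [hx, mul_pow, ← zpow_natCast (q ^ ((1 : ℤ) - 2 * N)) k, ← zpow_mul]
  rw [hxk]
  rw [show z ^ ((k : ℤ) - N) = z ^ (-(N : ℤ)) * z ^ (k : ℕ) by
    rw [← zpow_natCast z k, ← zpow_add₀ hz]; congr 1; ring]
  rw [show q ^ (((k : ℤ) - N) ^ 2) = q ^ (N ^ 2 : ℕ) * q ^ (k * (k - 1) : ℕ) *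
      q ^ (((1 : ℤ) - 2 * N) * k) by
    rw [← zpow_natCast q (N ^ 2), ← zpow_natCast q (k * (k - 1)), ← zpow_add₀ hq,
      ← zpow_add₀ hq]
    congr 1
    have hk1 : ((k * (k - 1) : ℕ) : ℤ) = (k : ℤ) * ((k : ℤ) - 1) := by
      push_cast [Nat.cast_sub]
      rcases k with _ | k
      · simp
      · push_cast; ring
    rw [hk1]
    push_cast
    ring]
  ring

lemma exp_sub_one_le_mul {x : ℝ} (hx : 0 ≤ x) : Real.exp x - 1 ≤ x * Real.exp x := by
  have h1 := Real.add_one_le_exp (-x)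
  have h2 : Real.exp (-x) = (Real.exp x)⁻¹ := Real.exp_neg x
  have h3 : 0 < Real.exp x := Real.exp_pos x
  rw [h2] at h1
  have h4 : (-x + 1) * Real.exp x ≤ 1 := by
    calc (-x + 1) * Real.exp x ≤ (Real.exp x)⁻¹ * Real.exp x := by nlinarith
      _ = 1 := inv_mul_cancel₀ h3.ne'
  nlinarith

lemma norm_prod_one_add_sub_one_le {ι : Type*} (s : Finset ι) (x : ι → ℂ) :
    ‖(∏ i ∈ s, (1 + x i)) - 1‖ ≤ Real.exp (∑ i ∈ s, ‖x i‖) - 1 := by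
  classical
  induction s using Finset.induction_on with
  | empty => simp
  | insert a s ha ih =>
    rw [Finset.prod_insert ha, Finset.sum_insert ha]
    have hP : ‖∏ i ∈ s, (1 + x i)‖ ≤ Real.exp (∑ i ∈ s, ‖x i‖) := by
      calc ‖∏ i ∈ s, (1 + x i)‖ = ‖(∏ i ∈ s, (1 + x i)) - 1 + 1‖ := by ring_nf
        _ ≤ ‖(∏ i ∈ s, (1 + x i)) - 1‖ + 1 := by simpa using norm_add_le ((∏ i ∈ s, (1 + x i)) - 1) 1
        _ ≤ Real.exp (∑ i ∈ s, ‖x i‖) - 1 + 1 := by linarith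
        _ = Real.exp (∑ i ∈ s, ‖x i‖) := by ring
    have key : (1 + x a) * (∏ i ∈ s, (1 + x i)) - 1
        = ((∏ i ∈ s, (1 + x i)) - 1) + x a * ∏ i ∈ s, (1 + x i) := by ring
    rw [key]
    have h1 : 1 + ‖x a‖ ≤ Real.exp ‖x a‖ := by
      have := Real.add_one_le_exp ‖x a‖; linarith
    have h2 : Real.exp (‖x a‖ + ∑ i ∈ s, ‖x i‖) = Real.exp ‖x a‖ * Real.exp (∑ i ∈ s, ‖x i‖) :=
      Real.exp_add _ _
    have h3 : (0:ℝ) < Real.exp (∑ i ∈ s, ‖x i‖) := Real.exp_pos _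
    calc ‖((∏ i ∈ s, (1 + x i)) - 1) + x a * ∏ i ∈ s, (1 + x i)‖
        ≤ ‖(∏ i ∈ s, (1 + x i)) - 1‖ + ‖x a‖ * ‖∏ i ∈ s, (1 + x i)‖ := by
          refine (norm_add_le _ _).trans ?_
          rw [norm_mul]
      _ ≤ (Real.exp (∑ i ∈ s, ‖x i‖) - 1) + ‖x a‖ * Real.exp (∑ i ∈ s, ‖x i‖) := by
          have := norm_nonneg (x a)
          nlinarith
      _ ≤ Real.exp (‖x a‖ + ∑ i ∈ s, ‖x i‖) - 1 := by
          rw [h2]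
          have := norm_nonneg (x a)
          nlinarith

lemma norm_prod_one_add_le {ι : Type*} (s : Finset ι) (x : ι → ℂ) :
    ‖∏ i ∈ s, (1 + x i)‖ ≤ Real.exp (∑ i ∈ s, ‖x i‖) := by
  calc ‖∏ i ∈ s, (1 + x i)‖ = ‖(∏ i ∈ s, (1 + x i)) - 1 + 1‖ := by ring_nf
    _ ≤ ‖(∏ i ∈ s, (1 + x i)) - 1‖ + 1 := by simpa using norm_add_le ((∏ i ∈ s, (1 + x i)) - 1) 1
    _ ≤ Real.exp (∑ i ∈ s, ‖x i‖) - 1 + 1 := by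
        have := norm_prod_one_add_sub_one_le s x; linarith
    _ = Real.exp (∑ i ∈ s, ‖x i‖) := by ring

lemma multipliable_of_summable {f : ℕ → ℂ} (h : Summable fun n => ‖f n - 1‖) :
    Multipliable f := by
  have h0 : Filter.Tendsto (fun n => ‖f n - 1‖) Filter.atTop (nhds 0) := h.tendsto_atTop_zero
  have hev : ∀ᶠ n in Filter.atTop, ‖f n - 1‖ < 1/2 :=
    h0.eventually_lt_const (by norm_num)
  obtain ⟨N, hN⟩ := Filter.eventually_atTop.1 hev
  set s : Set ℕ := {n | n < N} with hs
  have hfin : s.Finite := Set.finite_lt_nat N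
  have hmul1 : Multipliable (f ∘ (↑) : s → ℂ) := by
    haveI : Finite s := hfin.to_subtype
    exact Multipliable.of_finite
  have hmul2 : Multipliable (f ∘ (↑) : ↥sᶜ → ℂ) := by
    have hge : ∀ n : ↥sᶜ, N ≤ (n : ℕ) := by
      intro n
      have h1 := n.2
      simp only [hs, Set.mem_compl_iff, Set.mem_setOf_eq, not_lt] at h1
      exact h1
    have hne : ∀ n : ↥sᶜ, f n ≠ 0 := by
      intro n heq
      have h1 := hN n (hge n)
      rw [heq] at h1
      norm_num at h1
    have hlog : Summable fun n : ↥sᶜ => Complex.log (f n) := by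
      have hsub : Summable fun n : ↥sᶜ => ‖f (n : ℕ) - 1‖ := h.subtype _
      apply Summable.of_norm_bounded (hsub.mul_left (3/2))
      intro n
      have h1 := (hN n (hge n)).le
      have h3 : ‖Complex.log (1 + (f (n : ℕ) - 1))‖ ≤ 3/2 * ‖f (n : ℕ) - 1‖ :=
        Complex.norm_log_one_add_half_le_self h1
      rw [show (1 : ℂ) + (f (n : ℕ) - 1) = f (n : ℕ) by ring] at h3
      exact h3
    exact Complex.multipliable_of_summable_log hlog
  exact Multipliable.mul_compl hmul1 hmul2

lemma Qp_mul_gb_eq {t : ℂ} (ht : ‖t‖ < 1) {N a : ℕ} (ha : a ≤ N) :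
    Qp t N * gb t (2 * N) (N + a)
      = (∏ i ∈ Finset.range a, (1 - t ^ (N - a + 1 + i))) *
        ∏ i ∈ Finset.range (N - a), (1 - t ^ (N + a + 1 + i)) := by
  have h1 := gb_mul_Qp t (2 * N) (N + a) (by omega)
  rw [show 2 * N - (N + a) = N - a by omega] at h1
  have e2 : Qp t (2 * N) = Qp t (N + a) * ∏ i ∈ Finset.range (N - a), (1 - t ^ (N + a + 1 + i)) := by
    rw [show 2 * N = (N + a) + (N - a) by omega, Qp_add]
  have e3 : Qp t N = Qp t (N - a) * ∏ i ∈ Finset.range a, (1 - t ^ (N - a + 1 + i)) := by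
    conv_lhs => rw [show N = (N - a) + a by omega]
    rw [Qp_add]
  apply mul_left_cancel₀ (mul_ne_zero (Qp_ne_zero ht (N + a)) (Qp_ne_zero ht (N - a)))
  calc Qp t (N + a) * Qp t (N - a) * (Qp t N * gb t (2 * N) (N + a))
      = Qp t N * (gb t (2 * N) (N + a) * (Qp t (N + a) * Qp t (N - a))) := by ring
    _ = Qp t N * Qp t (2 * N) := by rw [h1]
    _ = Qp t (N + a) * Qp t (N - a) *
        ((∏ i ∈ Finset.range a, (1 - t ^ (N - a + 1 + i))) *
          ∏ i ∈ Finset.range (N - a), (1 - t ^ (N + a + 1 + i))) := by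
        rw [e2]
        nth_rewrite 1 [e3]
        ring

lemma sum_pow_norm_le {r : ℝ} (h0 : 0 ≤ r) (h1 : r < 1) (m k : ℕ) :
    ∑ i ∈ Finset.range k, r ^ (m + i) ≤ r ^ m * (1 - r)⁻¹ := by
  have : ∑ i ∈ Finset.range k, r ^ (m + i) = r ^ m * ∑ i ∈ Finset.range k, r ^ i := by
    rw [Finset.mul_sum]
    exact Finset.sum_congr rfl fun i _ => by rw [pow_add]
  rw [this]
  apply mul_le_mul_of_nonneg_left _ (pow_nonneg h0 m)
  calc ∑ i ∈ Finset.range k, r ^ i ≤ ∑' i : ℕ, r ^ i :=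
        Summable.sum_le_tsum (Finset.range k) (fun i _ => pow_nonneg h0 i)
          (summable_geometric_of_lt_one h0 h1)
    _ = (1 - r)⁻¹ := tsum_geometric_of_lt_one h0 h1

lemma prod_one_sub_pow_norm_le {t : ℂ} (ht : ‖t‖ < 1) (m k : ℕ) :
    ‖∏ i ∈ Finset.range k, (1 - t ^ (m + i))‖ ≤ Real.exp (‖t‖ ^ m * (1 - ‖t‖)⁻¹) := by
  have heq : ∀ i, (1 - t ^ (m + i)) = 1 + (-(t ^ (m + i))) := fun i => by ring
  calc ‖∏ i ∈ Finset.range k, (1 - t ^ (m + i))‖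
      = ‖∏ i ∈ Finset.range k, (1 + (-(t ^ (m + i))))‖ := by
        rw [Finset.prod_congr rfl fun i _ => heq i]
    _ ≤ Real.exp (∑ i ∈ Finset.range k, ‖-(t ^ (m + i))‖) := norm_prod_one_add_le _ _
    _ ≤ Real.exp (‖t‖ ^ m * (1 - ‖t‖)⁻¹) := by
        apply Real.exp_le_exp.2
        have : ∀ i, ‖-(t ^ (m + i))‖ = ‖t‖ ^ (m + i) := fun i => by
          rw [norm_neg, norm_pow]
        rw [Finset.sum_congr rfl fun i _ => this i]
        exact sum_pow_norm_le (norm_nonneg t) ht m k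

lemma prod_one_sub_pow_sub_one_norm_le {t : ℂ} (ht : ‖t‖ < 1) (m k : ℕ) :
    ‖(∏ i ∈ Finset.range k, (1 - t ^ (m + i))) - 1‖
      ≤ Real.exp (‖t‖ ^ m * (1 - ‖t‖)⁻¹) - 1 := by
  have heq : ∀ i, (1 - t ^ (m + i)) = 1 + (-(t ^ (m + i))) := fun i => by ring
  calc ‖(∏ i ∈ Finset.range k, (1 - t ^ (m + i))) - 1‖
      = ‖(∏ i ∈ Finset.range k, (1 + (-(t ^ (m + i))))) - 1‖ := by
        rw [Finset.prod_congr rfl fun i _ => heq i]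
    _ ≤ Real.exp (∑ i ∈ Finset.range k, ‖-(t ^ (m + i))‖) - 1 :=
        norm_prod_one_add_sub_one_le _ _
    _ ≤ Real.exp (‖t‖ ^ m * (1 - ‖t‖)⁻¹) - 1 := by
        have h2 : ∀ i, ‖-(t ^ (m + i))‖ = ‖t‖ ^ (m + i) := fun i => by
          rw [norm_neg, norm_pow]
        rw [Finset.sum_congr rfl fun i _ => h2 i]
        have := sum_pow_norm_le (norm_nonneg t) ht m k
        have := Real.exp_le_exp.2 this
        linarith

lemma D_norm_le {t : ℂ} (ht : ‖t‖ < 1) {N a : ℕ} (ha : a ≤ N) :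
    ‖Qp t N * gb t (2 * N) (N + a)‖ ≤ Real.exp ((1 - ‖t‖)⁻¹) ^ 2 := by
  rw [Qp_mul_gb_eq ht ha, norm_mul]
  have hK : (0:ℝ) < (1 - ‖t‖)⁻¹ := by
    apply inv_pos.2; linarith
  have hb : ∀ m k : ℕ, ‖∏ i ∈ Finset.range k, (1 - t ^ (m + i))‖ ≤ Real.exp ((1 - ‖t‖)⁻¹) := by
    intro m k
    refine (prod_one_sub_pow_norm_le ht m k).trans (Real.exp_le_exp.2 ?_)
    calc ‖t‖ ^ m * (1 - ‖t‖)⁻¹ ≤ 1 * (1 - ‖t‖)⁻¹ := by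
          apply mul_le_mul_of_nonneg_right _ hK.le
          exact pow_le_one₀ (norm_nonneg t) ht.le
      _ = (1 - ‖t‖)⁻¹ := one_mul _
  calc ‖∏ i ∈ Finset.range a, (1 - t ^ (N - a + 1 + i))‖ *
        ‖∏ i ∈ Finset.range (N - a), (1 - t ^ (N + a + 1 + i))‖
      ≤ Real.exp ((1 - ‖t‖)⁻¹) * Real.exp ((1 - ‖t‖)⁻¹) := by
        apply mul_le_mul (hb _ _) (hb _ _) (norm_nonneg _) (Real.exp_pos _).le
    _ = Real.exp ((1 - ‖t‖)⁻¹) ^ 2 := by ring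

lemma D_tendsto {t : ℂ} (ht : ‖t‖ < 1) (a : ℕ) :
    Filter.Tendsto (fun N => Qp t N * gb t (2 * N) (N + a)) Filter.atTop (nhds 1) := by
  set K : ℝ := (1 - ‖t‖)⁻¹ with hK
  have hK0 : (0:ℝ) < K := by rw [hK]; apply inv_pos.2; linarith
  have hKe : (0:ℝ) ≤ Real.exp K := (Real.exp_pos _).le
  -- the dominating sequence
  set B : ℕ → ℝ := fun N => Real.exp K * (Real.exp (‖t‖ ^ (N - a + 1) * K) - 1) +
      (Real.exp (‖t‖ ^ (N + a + 1) * K) - 1) with hB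
  have hDbound : ∀ N, a ≤ N → ‖Qp t N * gb t (2 * N) (N + a) - 1‖ ≤ B N := by
    intro N haN
    rw [Qp_mul_gb_eq ht haN]
    set P1 : ℂ := ∏ i ∈ Finset.range a, (1 - t ^ (N - a + 1 + i)) with hP1
    set P2 : ℂ := ∏ i ∈ Finset.range (N - a), (1 - t ^ (N + a + 1 + i)) with hP2
    have key : P1 * P2 - 1 = (P1 - 1) * P2 + (P2 - 1) := by ring
    rw [key]
    have b1 : ‖P1 - 1‖ ≤ Real.exp (‖t‖ ^ (N - a + 1) * K) - 1 :=
      prod_one_sub_pow_sub_one_norm_le ht _ _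
    have b2 : ‖P2 - 1‖ ≤ Real.exp (‖t‖ ^ (N + a + 1) * K) - 1 :=
      prod_one_sub_pow_sub_one_norm_le ht _ _
    have b3 : ‖P2‖ ≤ Real.exp K := by
      refine (prod_one_sub_pow_norm_le ht _ _).trans (Real.exp_le_exp.2 ?_)
      calc ‖t‖ ^ (N + a + 1) * K ≤ 1 * K := by
            apply mul_le_mul_of_nonneg_right _ hK0.le
            exact pow_le_one₀ (norm_nonneg t) ht.le
        _ = K := one_mul _
    calc ‖(P1 - 1) * P2 + (P2 - 1)‖ ≤ ‖P1 - 1‖ * ‖P2‖ + ‖P2 - 1‖ := by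
          refine (norm_add_le _ _).trans ?_
          rw [norm_mul]
      _ ≤ (Real.exp (‖t‖ ^ (N - a + 1) * K) - 1) * Real.exp K +
            (Real.exp (‖t‖ ^ (N + a + 1) * K) - 1) := by
          have h1 : (0:ℝ) ≤ ‖P2‖ := norm_nonneg _
          have h2 : (1:ℝ) ≤ Real.exp (‖t‖ ^ (N - a + 1) * K) :=
            Real.one_le_exp (by positivity)
          nlinarith [norm_nonneg (P1 - 1), b1, b2, b3]
      _ = B N := by rw [hB]; ring
  -- B tends to 0
  have hpow : ∀ c : ℕ, Filter.Tendsto (fun N : ℕ => ‖t‖ ^ (N - a + c)) Filter.atTop (nhds 0) := by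
    intro c
    apply Filter.Tendsto.comp (tendsto_pow_atTop_nhds_zero_of_lt_one (norm_nonneg t) ht)
    apply Filter.tendsto_atTop.2
    intro b
    rw [Filter.eventually_atTop]
    exact ⟨b + a, fun n hn => by omega⟩
  have hpow2 : ∀ c : ℕ, Filter.Tendsto (fun N : ℕ => ‖t‖ ^ (N + a + c)) Filter.atTop (nhds 0) := by
    intro c
    apply Filter.Tendsto.comp (tendsto_pow_atTop_nhds_zero_of_lt_one (norm_nonneg t) ht)
    apply Filter.tendsto_atTop.2
    intro b
    rw [Filter.eventually_atTop]
    exact ⟨b, fun n hn => by omega⟩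
  have hexp : ∀ (u : ℕ → ℝ), Filter.Tendsto u Filter.atTop (nhds 0) →
      Filter.Tendsto (fun N => Real.exp (u N * K) - 1) Filter.atTop (nhds 0) := by
    intro u hu
    have h1 : Filter.Tendsto (fun N => u N * K) Filter.atTop (nhds 0) := by
      simpa using hu.mul_const K
    have h2 : Filter.Tendsto (fun N => Real.exp (u N * K)) Filter.atTop (nhds 1) := by
      simpa [Function.comp_def] using (Real.continuous_exp.tendsto 0).comp h1
    simpa using h2.sub_const 1
  have hBlim : Filter.Tendsto B Filter.atTop (nhds 0) := by
    rw [hB]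
    have l1 := (hexp _ (hpow 1)).const_mul (Real.exp K)
    have l2 := hexp _ (hpow2 1)
    simpa using l1.add l2
  -- conclude
  rw [tendsto_iff_norm_sub_tendsto_zero]
  apply squeeze_zero_norm'
  · rw [Filter.eventually_atTop]
    refine ⟨a, fun N hN => ?_⟩
    simpa using hDbound N hN
  · exact hBlim

end JTP

open JTP Filter

/-- Jacobi's triple product: for `z ≠ 0` and `|q| < 1`,
`∑_{n=-∞}^{∞} zⁿ q^{n²} = ∏_{n≥0} (1 - q^{2n+2})(1 + z q^{2n+1})(1 + z⁻¹ q^{2n+1})`. -/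
theorem jacobi_triple_product (z q : ℂ) (hz : z ≠ 0) (hq : ‖q‖ < 1) :
    ∑' n : ℤ, z ^ n * q ^ (n ^ 2) =
      ∏' n : ℕ, (1 - q ^ (2 * n + 2)) * (1 + z * q ^ (2 * n + 1)) *
        (1 + z⁻¹ * q ^ (2 * n + 1)) := by
  rcases eq_or_ne q 0 with rfl | hq0
  · -- trivial case q = 0
    have hL : ∑' n : ℤ, z ^ n * (0 : ℂ) ^ (n ^ 2) = 1 := by
      rw [tsum_eq_single (0 : ℤ)]
      · norm_num
      · intro n hn
        rw [zero_zpow _ (pow_ne_zero 2 hn)]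
        ring
    have hR : (fun n : ℕ => (1 - (0 : ℂ) ^ (2 * n + 2)) * (1 + z * 0 ^ (2 * n + 1)) *
        (1 + z⁻¹ * 0 ^ (2 * n + 1))) = fun _ => (1 : ℂ) := by
      funext n
      rw [zero_pow (by omega : 2 * n + 2 ≠ 0), zero_pow (by omega : 2 * n + 1 ≠ 0)]
      ring
    rw [hL, hR, tprod_one]
  -- main case
  set t : ℂ := q ^ 2 with htdef
  have ht : ‖t‖ < 1 := by
    rw [htdef, norm_pow]
    calc ‖q‖ ^ 2 ≤ ‖q‖ ^ 1 := pow_le_pow_of_le_one (norm_nonneg q) hq.le (by omega)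
      _ < 1 := by simpa using hq
  set fac : ℕ → ℂ := fun n => (1 - q ^ (2 * n + 2)) * (1 + z * q ^ (2 * n + 1)) *
      (1 + z⁻¹ * q ^ (2 * n + 1)) with hfacdef
  -- Multipliability of the triple product
  have hsum : Summable fun n => ‖fac n - 1‖ := by
    set ρ : ℝ := ‖q‖ ^ 2 with hρdef
    have hρ0 : (0 : ℝ) ≤ ρ := by positivity
    have hρ1 : ρ < 1 := by
      rw [hρdef]
      calc ‖q‖ ^ 2 ≤ ‖q‖ ^ 1 := pow_le_pow_of_le_one (norm_nonneg q) hq.le (by omega)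
        _ < 1 := by simpa using hq
    set μ : ℝ := ‖q‖ ^ 2 + ‖z‖ * ‖q‖ + ‖z⁻¹‖ * ‖q‖ with hμdef
    have hμ0 : (0 : ℝ) ≤ μ := by positivity
    refine Summable.of_nonneg_of_le (fun n => norm_nonneg _) (fun n => ?_)
      ((summable_geometric_of_lt_one hρ0 hρ1).mul_left (μ * Real.exp μ))
    set x : Fin 3 → ℂ := ![-(q ^ (2 * n + 2)), z * q ^ (2 * n + 1), z⁻¹ * q ^ (2 * n + 1)]
      with hxdef
    have hfx : fac n - 1 = (∏ i : Fin 3, (1 + x i)) - 1 := by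
      rw [Fin.prod_univ_three]
      simp only [hfacdef, hxdef, Matrix.cons_val_zero, Matrix.cons_val_one, Matrix.head_cons,
        Matrix.cons_val_two, Matrix.tail_cons]
      ring_nf
    have hS : ∑ i : Fin 3, ‖x i‖ = μ * ρ ^ n := by
      rw [Fin.sum_univ_three]
      simp only [hxdef, Matrix.cons_val_zero, Matrix.cons_val_one, Matrix.head_cons,
        Matrix.cons_val_two, Matrix.tail_cons, norm_neg, norm_mul, norm_pow]
      rw [hμdef, hρdef]
      rw [show 2 * n + 2 = 2 + 2 * n by omega, show 2 * n + 1 = 1 + 2 * n by omega,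
        pow_add, pow_add, ← pow_mul]
      ring
    have hb1 : ‖fac n - 1‖ ≤ Real.exp (μ * ρ ^ n) - 1 := by
      rw [hfx, ← hS]
      exact JTP.norm_prod_one_add_sub_one_le Finset.univ x
    have hρn1 : ρ ^ n ≤ 1 := pow_le_one₀ hρ0 hρ1.le
    have hμρ : 0 ≤ μ * ρ ^ n := by positivity
    have hb2 : Real.exp (μ * ρ ^ n) - 1 ≤ (μ * ρ ^ n) * Real.exp (μ * ρ ^ n) :=
      exp_sub_one_le_mul hμρ
    have hb3 : Real.exp (μ * ρ ^ n) ≤ Real.exp μ := by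
      apply Real.exp_le_exp.2
      nlinarith
    calc ‖fac n - 1‖ ≤ (μ * ρ ^ n) * Real.exp (μ * ρ ^ n) := by linarith
      _ ≤ (μ * ρ ^ n) * Real.exp μ := mul_le_mul_of_nonneg_left hb3 hμρ
      _ = (μ * Real.exp μ) * ρ ^ n := by ring
  have hmul : Multipliable fac := multipliable_of_summable hsum
  have hprod : Tendsto (fun N => ∏ n ∈ Finset.range N, fac n) atTop (nhds (∏' n, fac n)) :=
    hmul.hasProd.tendsto_prod_nat
  -- the doubly-indexed family
  set g : ℕ → ℤ → ℂ := fun N m =>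
    if m.natAbs ≤ N then (Qp t N * gb t (2 * N) ((m + N).toNat)) * (z ^ m * q ^ (m ^ 2))
    else 0 with hgdef
  -- claim 1 : partial products equal tsums of g
  have claim1 : ∀ N, ∏ n ∈ Finset.range N, fac n = ∑' m : ℤ, g N m := by
    intro N
    have stepA : ∏ n ∈ Finset.range N, fac n
        = Qp t N * ∏ n ∈ Finset.range N, ((1 + z * q ^ (2 * n + 1)) *
            (1 + z⁻¹ * q ^ (2 * n + 1))) := by
      have : ∀ n ∈ Finset.range N, fac n = (1 - t ^ (n + 1)) *
          ((1 + z * q ^ (2 * n + 1)) * (1 + z⁻¹ * q ^ (2 * n + 1))) := by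
        intro n _
        rw [hfacdef, htdef, ← pow_mul]
        rw [show 2 * (n + 1) = 2 * n + 2 by omega]
        ring
      rw [Finset.prod_congr rfl this, Finset.prod_mul_distrib, ← Qp]
    have stepB := finite_jtp q z hq0 hz N
    rw [stepA, stepB, ← htdef, Finset.mul_sum]
    have stepC : ∑ k ∈ Finset.range (2 * N + 1),
        Qp t N * (gb t (2 * N) k * (z ^ ((k : ℤ) - N) * q ^ (((k : ℤ) - N) ^ 2)))
        = ∑ m ∈ Finset.Icc (-(N : ℤ)) N, g N m := by
      refine Finset.sum_nbij' (fun k => (k : ℤ) - N) (fun m => (m + N).toNat) ?_ ?_ ?_ ?_ ?_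
      · intro k hk
        simp only [Finset.mem_range] at hk
        simp only [Finset.mem_Icc]
        omega
      · intro m hm
        simp only [Finset.mem_Icc] at hm
        simp only [Finset.mem_range]
        omega
      · intro k hk
        simp only [Finset.mem_range] at hk
        show ((k : ℤ) - N + N).toNat = k
        omega
      · intro m hm
        simp only [Finset.mem_Icc] at hm
        show ((((m + N).toNat : ℕ) : ℤ) - N) = m
        omega
      · intro k hk
        simp only [Finset.mem_range] at hk
        simp only [hgdef]
        have hcond : ((k : ℤ) - N).natAbs ≤ N := by omega
        rw [if_pos hcond]
        have htn : (((k : ℤ) - N) + N).toNat = k := by omega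
        rw [htn]
        ring
    rw [stepC]
    symm
    apply tsum_eq_sum
    intro m hm
    simp only [Finset.mem_Icc] at hm
    have hnot : ¬ m.natAbs ≤ N := by omega
    simp [hgdef, hnot]
  -- claim 4 : pointwise limits
  have claim4 : ∀ m : ℤ, Tendsto (fun N => g N m) atTop (nhds (z ^ m * q ^ (m ^ 2))) := by
    intro m
    set a : ℕ := m.natAbs with hadef
    have heq : (fun N => g N m) =ᶠ[atTop]
        fun N => (Qp t N * gb t (2 * N) (N + a)) * (z ^ m * q ^ (m ^ 2)) := by
      apply Filter.eventuallyEq_of_mem (Filter.mem_atTop a)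
      intro N hN
      have hN' : a ≤ N := hN
      simp only [hgdef]
      rw [if_pos (show m.natAbs ≤ N by omega)]
      rcases Int.natAbs_eq m with hm | hm
      · have : (m + N).toNat = N + a := by omega
        rw [this]
      · have : (m + N).toNat = N - a := by omega
        rw [this]
        have h2 : gb t (2 * N) (N - a) = gb t (2 * N) (N + a) := by
          have h3 := gb_symm ht (m := 2 * N) (k := N - a) (by omega)
          rw [show 2 * N - (N - a) = N + a by omega] at h3
          exact h3.symm
        rw [h2]
    apply Tendsto.congr' heq.symm
    have := (D_tendsto ht a).mul_const (z ^ m * q ^ (m ^ 2))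
    simpa using this
  -- claim 2 : uniform domination
  set w : ℝ := max ‖z‖ ‖z⁻¹‖ with hwdef
  have hw0 : (0 : ℝ) ≤ w := le_trans (norm_nonneg z) (le_max_left _ _)
  set C : ℝ := Real.exp ((1 - ‖t‖)⁻¹) ^ 2 with hCdef
  have hC0 : (0 : ℝ) < C := by positivity
  set bound : ℤ → ℝ := fun m => C * w ^ m.natAbs * ‖q‖ ^ m.natAbs ^ 2 with hbdef
  have claim2 : ∀ N, ∀ m : ℤ, ‖g N m‖ ≤ bound m := by
    intro N m
    simp only [hgdef, hbdef]
    by_cases hcond : m.natAbs ≤ N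
    · rw [if_pos hcond]
      set a : ℕ := m.natAbs with hadef
      have hDa : Qp t N * gb t (2 * N) ((m + N).toNat) = Qp t N * gb t (2 * N) (N + a) := by
        rcases Int.natAbs_eq m with hm | hm
        · rw [show (m + N).toNat = N + a by omega]
        · rw [show (m + N).toNat = N - a by omega]
          have h3 := gb_symm ht (m := 2 * N) (k := N - a) (by omega)
          rw [show 2 * N - (N - a) = N + a by omega] at h3
          rw [← h3]
      rw [hDa]
      have hD : ‖Qp t N * gb t (2 * N) (N + a)‖ ≤ C := D_norm_le ht hcond
      have hzm : ‖z ^ m‖ ≤ w ^ a := by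
        rcases Int.natAbs_eq m with hm | hm
        · rw [hm, zpow_natCast, norm_pow, ← hadef]
          exact pow_le_pow_left₀ (norm_nonneg z) (le_max_left _ _) a
        · rw [hm, zpow_neg, zpow_natCast, norm_inv, norm_pow, ← inv_pow, ← norm_inv, ← hadef]
          exact pow_le_pow_left₀ (norm_nonneg _) (le_max_right _ _) a
      have hqm : ‖q ^ (m ^ 2)‖ = ‖q‖ ^ a ^ 2 := by
        have h4 : m ^ 2 = ((a ^ 2 : ℕ) : ℤ) := by
          push_cast
          rw [hadef, ← Int.abs_eq_natAbs, sq_abs]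
        rw [h4, zpow_natCast, norm_pow]
      calc ‖Qp t N * gb t (2 * N) (N + a) * (z ^ m * q ^ (m ^ 2))‖
          = ‖Qp t N * gb t (2 * N) (N + a)‖ * (‖z ^ m‖ * ‖q ^ (m ^ 2)‖) := by
            rw [norm_mul, norm_mul (z ^ m)]
        _ ≤ C * (w ^ a * ‖q‖ ^ a ^ 2) := by
            apply mul_le_mul hD _ (by positivity) hC0.le
            rw [hqm]
            apply mul_le_mul_of_nonneg_right hzm (by positivity)
        _ = C * w ^ a * ‖q‖ ^ a ^ 2 := by ring
    · rw [if_neg hcond]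
      simp only [norm_zero]
      positivity
  -- claim 3 : the bound is summable
  have claim3 : Summable bound := by
    have hnat : Summable fun a : ℕ => C * w ^ a * ‖q‖ ^ a ^ 2 := by
      apply summable_of_ratio_norm_eventually_le (r := 1 / 2) (by norm_num)
      have hq2 : Tendsto (fun n : ℕ => w * ‖q‖ ^ (2 * n + 1)) atTop (nhds 0) := by
        have h5 : Tendsto (fun n : ℕ => ‖q‖ ^ (2 * n + 1)) atTop (nhds 0) := by
          apply Filter.Tendsto.comp (tendsto_pow_atTop_nhds_zero_of_lt_one (norm_nonneg q) hq)
          apply Filter.tendsto_atTop.2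
          intro b
          rw [Filter.eventually_atTop]
          exact ⟨b, fun n hn => by omega⟩
        simpa using h5.const_mul w
      have hev : ∀ᶠ n : ℕ in atTop, w * ‖q‖ ^ (2 * n + 1) ≤ 1 / 2 :=
        (hq2.eventually_lt_const (by norm_num)).mono fun n h => h.le
      filter_upwards [hev] with n hn
      have e5 : C * w ^ (n + 1) * ‖q‖ ^ (n + 1) ^ 2
          = (w * ‖q‖ ^ (2 * n + 1)) * (C * w ^ n * ‖q‖ ^ n ^ 2) := by
        rw [show (n + 1) ^ 2 = n ^ 2 + (2 * n + 1) by ring, pow_add, pow_succ]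
        ring
      rw [Real.norm_of_nonneg (by positivity), Real.norm_of_nonneg (by positivity), e5]
      apply mul_le_mul_of_nonneg_right hn (by positivity)
    apply Summable.of_nat_of_neg
    · apply hnat.congr
      intro a
      simp [hbdef]
    · apply hnat.congr
      intro a
      simp [hbdef]
  -- Tannery's theorem
  have hT : Tendsto (fun N => ∑' m : ℤ, g N m) atTop
      (nhds (∑' m : ℤ, z ^ m * q ^ (m ^ 2))) :=
    tendsto_tsum_of_dominated_convergence claim3 claim4 (Filter.Eventually.of_forall claim2)
  have hT' : Tendsto (fun N => ∏ n ∈ Finset.range N, fac n) atTop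
      (nhds (∑' m : ℤ, z ^ m * q ^ (m ^ 2))) := by
    apply hT.congr
    intro N
    exact (claim1 N).symm
  exact tendsto_nhds_unique hT' hprod
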